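/- Let D = (E,𝓕) be a vf-safe delta-matroid with dual D* := D*E, and let e ∈ E. Then: (1) e is a non-trivial orientable ribbon loop of D* if and only if e is a non-trivial orientable ribbon loop of (D+e)*; (2) e is a trivial orientable ribbon loop of D* if and only if e is a trivial orientable ribbon loop of (D+e)*; (3) e is a coloop of D* if and only if e is a trivial non-orientable ribbon loop of (D+e)*; and (4) e is neither a ribbon loop nor a coloop of D* if and only if e is a non-trivial non-orientable ribbon loop of (D+e)*. -/

import Mathlib

open scoped symmDiff

structure SetSystem (α : Type) [DecidableEq α] where
  E : Finset α
  F : Finset (Finset α)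

namespace SetSystem

variable {α : Type} [DecidableEq α]

/-- A delta-matroid: nonempty collection of feasible subsets of the ground set
satisfying the symmetric exchange axiom. -/
def IsDeltaMatroid (D : SetSystem α) : Prop :=
  D.F.Nonempty ∧ (∀ F ∈ D.F, F ⊆ D.E) ∧
    ∀ X ∈ D.F, ∀ Y ∈ D.F, ∀ u ∈ X ∆ Y, ∃ v ∈ X ∆ Y, X ∆ ({u, v} : Finset α) ∈ D.F

/-- A matroid, viewed as a delta-matroid whose feasible sets are equicardinal. -/
def IsMatroid (D : SetSystem α) : Prop :=
  D.IsDeltaMatroid ∧ ∀ F₁ ∈ D.F, ∀ F₂ ∈ D.F, F₁.card = F₂.card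

/-- The twist `D*A`. -/
def twist (D : SetSystem α) (A : Finset α) : SetSystem α :=
  ⟨D.E, D.F.image fun F => A ∆ F⟩

/-- The dual `D* := D * E`. -/
def dual (D : SetSystem α) : SetSystem α := D.twist D.E

def IsLoop (D : SetSystem α) (e : α) : Prop := ∀ F ∈ D.F, e ∉ F

def IsColoop (D : SetSystem α) (e : α) : Prop := ∀ F ∈ D.F, e ∈ F

open Classical in
/-- Deletion of a single element (when `e` is a coloop, `D∖e := D/e`). -/
noncomputable def del (D : SetSystem α) (e : α) : SetSystem α :=
  if D.IsColoop e then ⟨D.E.erase e, D.F.image fun F => F.erase e⟩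
  else ⟨D.E.erase e, D.F.filter fun F => e ∉ F⟩

open Classical in
/-- Contraction of a single element (when `e` is a loop, `D/e := D∖e`). -/
noncomputable def con (D : SetSystem α) (e : α) : SetSystem α :=
  if D.IsLoop e then ⟨D.E.erase e, D.F.filter fun F => e ∉ F⟩
  else ⟨D.E.erase e, (D.F.filter fun F => e ∈ F).image fun F => F.erase e⟩

/-- Loop complementation on a single element. -/
def lc (D : SetSystem α) (e : α) : SetSystem α :=
  ⟨D.E, D.F ∆ ((D.F.filter fun F => e ∉ F).image fun F => insert e F)⟩

/-- Loop complementation on a set of elements (applied in some order;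
the operation is order-independent). -/
noncomputable def lcSet (D : SetSystem α) (A : Finset α) : SetSystem α :=
  A.toList.foldl lc D

/-- The dual pivot `D *̄ A := ((D*A)+A)*A`. -/
noncomputable def dpivot (D : SetSystem α) (A : Finset α) : SetSystem α :=
  ((D.twist A).lcSet A).twist A

/-- Set systems reachable from `D` by sequences of twists and loop complementations. -/
inductive Reachable : SetSystem α → SetSystem α → Prop
  | refl (D : SetSystem α) : Reachable D D
  | twist (D D' : SetSystem α) (A : Finset α) (hA : A ⊆ D'.E) :
      Reachable D D' → Reachable D (D'.twist A)
  | lc (D D' : SetSystem α) (A : Finset α) (hA : A ⊆ D'.E) :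
      Reachable D D' → Reachable D (D'.lcSet A)

/-- A vf-safe delta-matroid: any sequence of twists and loop complementations
yields a delta-matroid. -/
def VfSafe (D : SetSystem α) : Prop := ∀ D', Reachable D D' → D'.IsDeltaMatroid

/-- The minimum-cardinality feasible sets. -/
def Fmin (D : SetSystem α) : Finset (Finset α) :=
  D.F.filter fun F => ∀ F' ∈ D.F, F.card ≤ F'.card

/-- The maximum-cardinality feasible sets. -/
def Fmax (D : SetSystem α) : Finset (Finset α) :=
  D.F.filter fun F => ∀ F' ∈ D.F, F'.card ≤ F.card

/-- The lower matroid `D_min`. -/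
def Dmin (D : SetSystem α) : SetSystem α := ⟨D.E, D.Fmin⟩

def IsRibbonLoop (D : SetSystem α) (e : α) : Prop := ∀ F ∈ D.Fmin, e ∉ F

def IsNonorientableRL (D : SetSystem α) (e : α) : Prop :=
  D.IsRibbonLoop e ∧ (D.twist {e}).IsRibbonLoop e

def IsOrientableRL (D : SetSystem α) (e : α) : Prop :=
  D.IsRibbonLoop e ∧ (D.dpivot {e}).IsRibbonLoop e

def IsTrivialOrientableRL (D : SetSystem α) (e : α) : Prop :=
  D.IsOrientableRL e ∧ D.IsLoop e

def IsTrivialNonorientableRL (D : SetSystem α) (e : α) : Prop :=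
  D.IsNonorientableRL e ∧ (D.lc e).IsLoop e


-- ===================== auxiliary lemmas =====================

lemma mem_twist' {D : SetSystem α} {A S : Finset α} :
    S ∈ (D.twist A).F ↔ A ∆ S ∈ D.F := by
  constructor
  · intro h
    simp only [twist, Finset.mem_image] at h
    obtain ⟨F, hF, rfl⟩ := h
    rwa [symmDiff_symmDiff_cancel_left]
  · intro h
    simp only [twist, Finset.mem_image]
    exact ⟨A ∆ S, h, symmDiff_symmDiff_cancel_left A S⟩

lemma mem_lc' {D : SetSystem α} {e : α} {S : Finset α} :
    S ∈ (D.lc e).F ↔ Xor' (S ∈ D.F) (e ∈ S ∧ S.erase e ∈ D.F) := by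
  have himg : S ∈ (D.F.filter fun F => e ∉ F).image (fun F => insert e F) ↔
      (e ∈ S ∧ S.erase e ∈ D.F) := by
    simp only [Finset.mem_image, Finset.mem_filter]
    constructor
    · rintro ⟨F, ⟨hF, heF⟩, rfl⟩
      exact ⟨Finset.mem_insert_self _ _, by rwa [Finset.erase_insert heF]⟩
    · rintro ⟨heS, hS⟩
      exact ⟨S.erase e, ⟨hS, Finset.notMem_erase _ _⟩, Finset.insert_erase heS⟩
  show S ∈ D.F ∆ _ ↔ _
  rw [Finset.mem_symmDiff, himg, Xor', Xor]

lemma singleton_symmDiff_of_mem {e : α} {K : Finset α} (h : e ∈ K) :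
    ({e} : Finset α) ∆ K = K.erase e := by
  ext x
  by_cases hx : x = e
  · subst hx
    simp [Finset.mem_symmDiff, h]
  · simp [Finset.mem_symmDiff, hx, Finset.mem_erase]

lemma singleton_symmDiff_of_not_mem {e : α} {K : Finset α} (h : e ∉ K) :
    ({e} : Finset α) ∆ K = insert e K := by
  ext x
  by_cases hx : x = e
  · subst hx
    simp [Finset.mem_symmDiff, h]
  · simp [Finset.mem_symmDiff, hx]

lemma erase_symmDiff' {e : α} {E K : Finset α} (hE : e ∈ E) (hK : e ∉ K) :
    (E ∆ K).erase e = E ∆ insert e K := by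
  ext x
  by_cases hx : x = e
  · subst hx
    simp [Finset.mem_symmDiff, hE]
  · simp [Finset.mem_symmDiff, hx, Finset.mem_erase]

lemma mem_dual' {D : SetSystem α} {K : Finset α} :
    K ∈ D.dual.F ↔ D.E ∆ K ∈ D.F := mem_twist'

lemma lcSet_singleton (D : SetSystem α) (e : α) : D.lcSet {e} = D.lc e := by
  simp [lcSet, Finset.toList_singleton]

lemma mem_dpivot_of_mem {D : SetSystem α} {e : α} {K : Finset α} (h : e ∈ K) :
    K ∈ (D.dpivot {e}).F ↔ K ∈ D.F := by
  rw [dpivot, lcSet_singleton, mem_twist', singleton_symmDiff_of_mem h, mem_lc',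
    mem_twist', singleton_symmDiff_of_not_mem (Finset.notMem_erase e K),
    Finset.insert_erase h]
  simp [Xor', Xor, Finset.notMem_erase]

lemma mem_dpivot_of_not_mem {D : SetSystem α} {e : α} {K : Finset α} (h : e ∉ K) :
    K ∈ (D.dpivot {e}).F ↔ Xor' (K ∈ D.F) (insert e K ∈ D.F) := by
  rw [dpivot, lcSet_singleton, mem_twist', singleton_symmDiff_of_not_mem h, mem_lc',
    mem_twist', singleton_symmDiff_of_mem (Finset.mem_insert_self e K),
    Finset.erase_insert h, mem_twist', singleton_symmDiff_of_not_mem h]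
  simp [Finset.mem_insert_self, Finset.erase_insert h, mem_twist',
    singleton_symmDiff_of_mem (Finset.mem_insert_self e K)]

lemma mem_Fmin' {D : SetSystem α} {S : Finset α} :
    S ∈ D.Fmin ↔ S ∈ D.F ∧ ∀ G ∈ D.F, S.card ≤ G.card := Finset.mem_filter

lemma isRibbonLoop_iff {D : SetSystem α} {e : α} :
    D.IsRibbonLoop e ↔ ∀ S ∈ D.F, (∀ G ∈ D.F, S.card ≤ G.card) → e ∉ S := by
  unfold IsRibbonLoop
  constructor
  · intro h S hS hmin
    exact h S (mem_Fmin'.mpr ⟨hS, hmin⟩)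
  · intro h S hS
    obtain ⟨h1, h2⟩ := mem_Fmin'.mp hS
    exact h S h1 h2

lemma ribbonLoop_congr {D D' : SetSystem α} (h : D.F = D'.F) {e : α} :
    D.IsRibbonLoop e ↔ D'.IsRibbonLoop e := by
  unfold IsRibbonLoop Fmin
  rw [h]

lemma claim2 (𝓖 : Finset (Finset α)) (e : α) (b : ℕ)
    (hex : ∀ X ∈ 𝓖, ∀ Y ∈ 𝓖, ∀ u ∈ X ∆ Y, ∃ v ∈ X ∆ Y, X ∆ ({u, v} : Finset α) ∈ 𝓖)
    (hb : ∀ G ∈ 𝓖, b ≤ G.card)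
    (ha : ∀ G ∈ 𝓖, e ∈ G → b + 1 ≤ G.card)
    (H : Finset α) (hH : H ∈ 𝓖) (heH : e ∉ H) (hHc : H.card = b)
    (M₀ : Finset α) (hM₀ : M₀ ∈ 𝓖) (heM₀ : e ∈ M₀) (hM₀c : M₀.card = b + 1) :
    insert e H ∈ 𝓖 := by
  have key : ∀ n (M : Finset α), M ∈ 𝓖 → e ∈ M → M.card = b + 1 →
      (M \ insert e H).card ≤ n → insert e H ∈ 𝓖 := by
    intro n
    induction n with
    | zero =>
      intro M hM heM hMc hle
      have hsub : M ⊆ insert e H := by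
        rw [← Finset.sdiff_eq_empty_iff_subset]
        exact Finset.card_eq_zero.mp (Nat.le_zero.mp hle)
      have hcard : (insert e H).card ≤ M.card := by
        rw [Finset.card_insert_of_notMem heH, hHc, hMc]
      rw [← Finset.eq_of_subset_of_card_le hsub hcard]
      exact hM
    | succ n ih =>
      intro M hM heM hMc hle
      rcases Finset.eq_empty_or_nonempty (M \ insert e H) with hemp | ⟨u, hu⟩
      · have hsub : M ⊆ insert e H := Finset.sdiff_eq_empty_iff_subset.mp hemp
        have hcard : (insert e H).card ≤ M.card := by
          rw [Finset.card_insert_of_notMem heH, hHc, hMc]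
        rw [← Finset.eq_of_subset_of_card_le hsub hcard]
        exact hM
      · obtain ⟨huM, huH⟩ := Finset.mem_sdiff.mp hu
        have hue : u ≠ e := fun h => huH (h ▸ Finset.mem_insert_self e H)
        have huH' : u ∉ H := fun h => huH (Finset.mem_insert_of_mem h)
        have hMcard2 : 2 ≤ M.card :=
          Finset.one_lt_card.mpr ⟨e, heM, u, huM, fun h => hue h.symm⟩
        have huXY : u ∈ M ∆ H := Finset.mem_symmDiff.mpr (Or.inl ⟨huM, huH'⟩)
        obtain ⟨v, hv, hMv⟩ := hex M hM H hH u huXY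
        rcases Finset.mem_symmDiff.mp hv with ⟨hvM, hvH⟩ | ⟨hvH, hvM⟩
        · exfalso
          rcases eq_or_ne v u with hvu | hvu
          · subst hvu
            have hpair : M ∆ ({v, v} : Finset α) = M.erase v := by
              rw [show ({v, v} : Finset α) = {v} by simp, symmDiff_comm]
              exact singleton_symmDiff_of_mem hvM
            rw [hpair] at hMv
            have h1 : e ∈ M.erase v := Finset.mem_erase.mpr ⟨Ne.symm hue, heM⟩
            have h2 := ha _ hMv h1
            have h3 := Finset.card_erase_add_one hvM
            omega
          · have hsubuv : ({u, v} : Finset α) ⊆ M := by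
              intro x hx
              rcases Finset.mem_insert.mp hx with rfl | hx
              · exact huM
              · exact (Finset.mem_singleton.mp hx) ▸ hvM
            have hMuv : M ∆ ({u, v} : Finset α) = M \ ({u, v} : Finset α) :=
              symmDiff_of_ge hsubuv
            rw [hMuv] at hMv
            have hcuv : ({u, v} : Finset α).card = 2 :=
              Finset.card_pair (fun h => hvu h.symm)
            have h2 := hb _ hMv
            have h3 : (M \ ({u, v} : Finset α)).card = M.card - 2 := by
              rw [Finset.card_sdiff_of_subset hsubuv, hcuv]
            omega
        · have hve : v ≠ e := fun h => heH (h ▸ hvH)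
          have hvu : v ≠ u := fun h => huH' (h ▸ hvH)
          have hM'eq : M ∆ ({u, v} : Finset α) = insert v (M.erase u) := by
            ext x
            simp only [Finset.mem_symmDiff,
              Finset.mem_insert, Finset.mem_singleton, Finset.mem_erase]
            constructor
            · rintro (⟨hxM, hx⟩ | ⟨(rfl | rfl), hxM⟩)
              · push_neg at hx
                exact Or.inr ⟨hx.1, hxM⟩
              · exact absurd huM hxM
              · exact Or.inl rfl
            · rintro (rfl | ⟨hxu, hxM⟩)
              · exact Or.inr ⟨Or.inr rfl, hvM⟩
              · exact Or.inl ⟨hxM, fun h => by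
                  rcases h with rfl | rfl
                  exacts [hxu rfl, hvM hxM]⟩
          rw [hM'eq] at hMv
          have heM' : e ∈ insert v (M.erase u) :=
            Finset.mem_insert_of_mem (Finset.mem_erase.mpr ⟨Ne.symm hue, heM⟩)
          have hvnotin : v ∉ M.erase u := fun h => hvM (Finset.mem_of_mem_erase h)
          have hc' : (insert v (M.erase u)).card = b + 1 := by
            rw [Finset.card_insert_of_notMem hvnotin]
            have := Finset.card_erase_add_one huM
            omega
          have hdiff : insert v (M.erase u) \ insert e H = (M \ insert e H).erase u := by
            ext x
            simp only [Finset.mem_sdiff, Finset.mem_insert, Finset.mem_erase]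
            constructor
            · rintro ⟨(rfl | ⟨hxu, hxM⟩), hxH⟩
              · exact absurd (Or.inr hvH) hxH
              · exact ⟨hxu, hxM, hxH⟩
            · rintro ⟨hxu, hxM, hxH⟩
              exact ⟨Or.inr ⟨hxu, hxM⟩, hxH⟩
          have hcle : (insert v (M.erase u) \ insert e H).card ≤ n := by
            rw [hdiff]
            have := Finset.card_erase_add_one hu
            omega
          exact ih (insert v (M.erase u)) hMv heM' hc' hcle
  exact key _ M₀ hM₀ heM₀ hM₀c le_rfl

lemma xor_aux1 (P Q : Prop) : Xor' (Xor' P Q) Q ↔ P := by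
  unfold Xor' Xor
  tauto

lemma xor_aux2 (P Q R : Prop) (hR : R) : Xor' P (R ∧ Xor' Q P) ↔ Q := by
  unfold Xor' Xor
  tauto

-- ===================== end auxiliary lemmas =====================

/-- Behaviour of the element `e` in `D*` versus `(D+e)*`. -/
theorem dual_lc_ribbon_loops (D : SetSystem α) (hD : D.VfSafe) (e : α) (he : e ∈ D.E) :
    ((D.dual.IsOrientableRL e ∧ ¬ D.dual.IsLoop e) ↔
      ((D.lc e).dual.IsOrientableRL e ∧ ¬ (D.lc e).dual.IsLoop e)) ∧
    (D.dual.IsTrivialOrientableRL e ↔ (D.lc e).dual.IsTrivialOrientableRL e) ∧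
    (D.dual.IsColoop e ↔ (D.lc e).dual.IsTrivialNonorientableRL e) ∧
    ((¬ D.dual.IsRibbonLoop e ∧ ¬ D.dual.IsColoop e) ↔
      ((D.lc e).dual.IsNonorientableRL e ∧ ¬ ((D.lc e).dual.lc e).IsLoop e)) := by
  have hr1 : Reachable D D.dual :=
    Reachable.twist D D D.E (Finset.Subset.refl _) (Reachable.refl D)
  have hDM1 := hD _ hr1
  have hDMT := hD _ (Reachable.twist D D.dual {e} (Finset.singleton_subset_iff.mpr he) hr1)
  have hne1 : D.dual.F.Nonempty := hDM1.1
  have hex1 := hDM1.2.2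
  have hexT := hDMT.2.2
  -- membership characterisations
  have hmem : ∀ K : Finset α, e ∈ K → (K ∈ (D.lc e).dual.F ↔ K ∈ D.dual.F) := by
    intro K hK
    rw [mem_dual', show (D.lc e).E = D.E from rfl, mem_lc', mem_dual']
    have h1 : e ∉ D.E ∆ K := by simp [Finset.mem_symmDiff, he, hK]
    simp [Xor', Xor, h1]
  have hmem' : ∀ K : Finset α, e ∉ K →
      (K ∈ (D.lc e).dual.F ↔ Xor' (K ∈ D.dual.F) (insert e K ∈ D.dual.F)) := by
    intro K hK
    have h1 : e ∈ D.E ∆ K := Finset.mem_symmDiff.mpr (Or.inl ⟨he, hK⟩)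
    rw [mem_dual', show (D.lc e).E = D.E from rfl, mem_lc', erase_symmDiff' he hK]
    simp only [mem_dual']
    simp [h1]
  have htw2 : ∀ K : Finset α, e ∈ K →
      (K ∈ ((D.lc e).dual.twist {e}).F ↔ Xor' (K.erase e ∈ D.dual.F) (K ∈ D.dual.F)) := by
    intro K hK
    rw [mem_twist', singleton_symmDiff_of_mem hK,
      hmem' (K.erase e) (Finset.notMem_erase e K), Finset.insert_erase hK]
  have htw2' : ∀ K : Finset α, e ∉ K →
      (K ∈ ((D.lc e).dual.twist {e}).F ↔ insert e K ∈ D.dual.F) := by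
    intro K hK
    rw [mem_twist', singleton_symmDiff_of_not_mem hK,
      hmem (insert e K) (Finset.mem_insert_self e K)]
  -- dual pivots
  have hFdp1 : (D.dual.dpivot {e}).F = (D.lc e).dual.F := by
    ext K
    by_cases hK : e ∈ K
    · rw [mem_dpivot_of_mem hK, hmem K hK]
    · rw [mem_dpivot_of_not_mem hK, hmem' K hK]
  have hFdp2 : ((D.lc e).dual.dpivot {e}).F = D.dual.F := by
    ext K
    by_cases hK : e ∈ K
    · rw [mem_dpivot_of_mem hK, hmem K hK]
    · rw [mem_dpivot_of_not_mem hK, hmem' K hK,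
        hmem (insert e K) (Finset.mem_insert_self e K)]
      exact xor_aux1 _ _
  have hRLdp1 : (D.dual.dpivot {e}).IsRibbonLoop e ↔ (D.lc e).dual.IsRibbonLoop e :=
    ribbonLoop_congr hFdp1
  have hRLdp2 : ((D.lc e).dual.dpivot {e}).IsRibbonLoop e ↔ D.dual.IsRibbonLoop e :=
    ribbonLoop_congr hFdp2
  -- loops correspond
  have hloop : D.dual.IsLoop e ↔ (D.lc e).dual.IsLoop e := by
    constructor
    · intro h K hK heK
      exact h K ((hmem K heK).mp hK) heK
    · intro h K hK heK
      exact h K ((hmem K heK).mpr hK) heK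
  -- loops of the second loop complementation ↔ coloops of the dual
  have hlc2mem : ∀ K : Finset α, e ∈ K →
      (K ∈ ((D.lc e).dual.lc e).F ↔ K.erase e ∈ D.dual.F) := by
    intro K hK
    rw [mem_lc', hmem K hK, hmem' (K.erase e) (Finset.notMem_erase e K),
      Finset.insert_erase hK]
    exact xor_aux2 _ _ _ hK
  have hL1 : ((D.lc e).dual.lc e).IsLoop e ↔ D.dual.IsColoop e := by
    constructor
    · intro h G hG
      by_contra heG
      have hmem2 : insert e G ∈ ((D.lc e).dual.lc e).F := by
        rw [hlc2mem _ (Finset.mem_insert_self e G), Finset.erase_insert heG]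
        exact hG
      exact h _ hmem2 (Finset.mem_insert_self e G)
    · intro h K hK heK
      exact Finset.notMem_erase e K (h _ ((hlc2mem K heK).mp hK))
  -- coloop implies nonorientable ribbon loop of the other system
  have hco_nonori : D.dual.IsColoop e → ((D.lc e).dual).IsNonorientableRL e := by
    intro hco
    refine ⟨?_, ?_⟩
    · rw [isRibbonLoop_iff]
      intro K hK hmin heK
      have hK1 : K ∈ D.dual.F := (hmem K heK).mp hK
      have hKe : K.erase e ∉ D.dual.F := fun h => Finset.notMem_erase e K (hco _ h)
      have hW : K.erase e ∈ (D.lc e).dual.F := by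
        rw [hmem' _ (Finset.notMem_erase e K), Finset.insert_erase heK]
        exact Or.inr ⟨hK1, hKe⟩
      have h1 := hmin _ hW
      have h2 := Finset.card_erase_add_one heK
      omega
    · rw [isRibbonLoop_iff]
      intro K hK hmin heK
      have hKe : K.erase e ∉ D.dual.F := fun h => Finset.notMem_erase e K (hco _ h)
      have hK1 : K ∈ D.dual.F := by
        rcases (htw2 K heK).mp hK with ⟨h, -⟩ | ⟨h, -⟩
        · exact absurd h hKe
        · exact h
      have hW : K.erase e ∈ ((D.lc e).dual.twist {e}).F := by
        rw [htw2' _ (Finset.notMem_erase e K), Finset.insert_erase heK]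
        exact hK1
      have h1 := hmin _ hW
      have h2 := Finset.card_erase_add_one heK
      omega
  -- part 4, forward direction
  have hpart4f : ¬D.dual.IsRibbonLoop e → ¬D.dual.IsColoop e →
      ((D.lc e).dual).IsNonorientableRL e := by
    intro hnRL hnCo
    have hex' : ∃ S ∈ D.dual.Fmin, e ∈ S := by
      by_contra hc
      push_neg at hc
      exact hnRL hc
    obtain ⟨M, hMf, heM⟩ := hex'
    obtain ⟨hM1, hMmin⟩ := mem_Fmin'.mp hMf
    have hMne : M.erase e ∉ D.dual.F := by
      intro h
      have h1 := hMmin _ h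
      have h2 := Finset.card_erase_add_one heM
      omega
    have hWmem : M.erase e ∈ (D.lc e).dual.F := by
      rw [hmem' _ (Finset.notMem_erase e M), Finset.insert_erase heM]
      exact Or.inr ⟨hM1, hMne⟩
    refine ⟨?_, ?_⟩
    · rw [isRibbonLoop_iff]
      intro K hK hmin heK
      have hK1 : K ∈ D.dual.F := (hmem K heK).mp hK
      have h1 := hMmin K hK1
      have h2 := hmin _ hWmem
      have h3 := Finset.card_erase_add_one heM
      omega
    · rw [isRibbonLoop_iff]
      intro K hK hmin heK
      have hW' : M.erase e ∈ ((D.lc e).dual.twist {e}).F := by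
        rw [htw2' _ (Finset.notMem_erase e M), Finset.insert_erase heM]
        exact hM1
      have h2 := hmin _ hW'
      have h3 : M.card ≤ K.card := by
        rcases (htw2 K heK).mp hK with ⟨h, -⟩ | ⟨h, -⟩
        · have h4 := hMmin _ h
          have h5 := Finset.card_erase_add_one heK
          omega
        · exact hMmin _ h
      have h4 := Finset.card_erase_add_one heM
      omega
  -- part 4, backward direction
  have hpart4b : ((D.lc e).dual).IsNonorientableRL e → ¬D.dual.IsColoop e →
      ¬D.dual.IsRibbonLoop e := by
    intro hN hnCo hRL1
    have hRL2 := hN.1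
    have hRLT2 := hN.2
    rw [isRibbonLoop_iff] at hRL1 hRL2 hRLT2
    obtain ⟨H0, hH0, hH0min⟩ := D.dual.F.exists_min_image Finset.card hne1
    have heH0 : e ∉ H0 := hRL1 H0 hH0 hH0min
    by_cases hes : ∃ G ∈ D.dual.F, e ∈ G
    · obtain ⟨G1, hG1, heG1⟩ := hes
      have hAne : (D.dual.F.filter fun G => e ∈ G).Nonempty :=
        ⟨G1, Finset.mem_filter.mpr ⟨hG1, heG1⟩⟩
      obtain ⟨M, hMA, hMmin0⟩ :=
        (D.dual.F.filter fun G => e ∈ G).exists_min_image Finset.card hAne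
      obtain ⟨hM1, heM⟩ := Finset.mem_filter.mp hMA
      have hMminE : ∀ G ∈ D.dual.F, e ∈ G → M.card ≤ G.card := fun G hG heG =>
        hMmin0 G (Finset.mem_filter.mpr ⟨hG, heG⟩)
      have hblta : ∀ G ∈ D.dual.F, e ∈ G → H0.card + 1 ≤ G.card := by
        intro G hG heG
        have h1 := hH0min G hG
        rcases eq_or_lt_of_le h1 with heq | hlt
        · exfalso
          refine hRL1 G hG ?_ heG
          intro G' hG'
          rw [← heq]
          exact hH0min G' hG'
        · omega
      by_cases hMc : M.card = H0.card + 1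
      · by_cases hKex : ∃ K ∈ (D.lc e).dual.F, e ∉ K ∧ K.card = H0.card
        · obtain ⟨K, hK2, heK, hKc⟩ := hKex
          rcases (hmem' K heK).mp hK2 with ⟨hKin, hKni⟩ | ⟨hKin, hKni⟩
          · exact hKni (claim2 D.dual.F e H0.card hex1 hH0min hblta K hKin heK hKc
              M hM1 heM hMc)
          · have hbT : ∀ G ∈ (D.dual.twist {e}).F, H0.card ≤ G.card := by
              intro G hG
              rw [mem_twist'] at hG
              by_cases heG : e ∈ G
              · rw [singleton_symmDiff_of_mem heG] at hG
                have h1 := hH0min _ hG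
                have h2 := Finset.card_erase_add_one heG
                omega
              · rw [singleton_symmDiff_of_not_mem heG] at hG
                have h1 := hblta _ hG (Finset.mem_insert_self e G)
                rw [Finset.card_insert_of_notMem heG] at h1
                omega
            have haT : ∀ G ∈ (D.dual.twist {e}).F, e ∈ G → H0.card + 1 ≤ G.card := by
              intro G hG heG
              rw [mem_twist', singleton_symmDiff_of_mem heG] at hG
              have h1 := hH0min _ hG
              have h2 := Finset.card_erase_add_one heG
              omega
            have hKT : K ∈ (D.dual.twist {e}).F := by
              rw [mem_twist', singleton_symmDiff_of_not_mem heK]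
              exact hKin
            have hMT : insert e H0 ∈ (D.dual.twist {e}).F := by
              rw [mem_twist', singleton_symmDiff_of_mem (Finset.mem_insert_self e H0),
                Finset.erase_insert heH0]
              exact hH0
            have hMTc : (insert e H0).card = H0.card + 1 :=
              Finset.card_insert_of_notMem heH0
            have hfin := claim2 (D.dual.twist {e}).F e H0.card hexT hbT haT K hKT heK hKc
              (insert e H0) hMT (Finset.mem_insert_self e H0) hMTc
            rw [mem_twist', singleton_symmDiff_of_mem (Finset.mem_insert_self e K),
              Finset.erase_insert heK] at hfin
            exact hKni hfin
        · refine hRL2 M ((hmem M heM).mpr hM1) ?_ heM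
          intro G hG2
          by_cases heG : e ∈ G
          · exact hMminE G ((hmem G heG).mp hG2) heG
          · have hb' : H0.card ≤ G.card := by
              rcases (hmem' G heG).mp hG2 with ⟨h, -⟩ | ⟨h, -⟩
              · exact hH0min G h
              · have h1 := hblta _ h (Finset.mem_insert_self e G)
                rw [Finset.card_insert_of_notMem heG] at h1
                omega
            have hneq : G.card ≠ H0.card := fun hc => hKex ⟨G, hG2, heG, hc⟩
            omega
      · have hMc2 : H0.card + 2 ≤ M.card := by
          have := hblta M hM1 heM
          omega
        have hni : insert e H0 ∉ D.dual.F := by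
          intro h
          have h1 := hMminE _ h (Finset.mem_insert_self e H0)
          rw [Finset.card_insert_of_notMem heH0] at h1
          omega
        have hWT : insert e H0 ∈ ((D.lc e).dual.twist {e}).F := by
          rw [htw2 _ (Finset.mem_insert_self e H0), Finset.erase_insert heH0]
          exact Or.inl ⟨hH0, hni⟩
        refine hRLT2 _ hWT ?_ (Finset.mem_insert_self e H0)
        intro G hGT
        rw [Finset.card_insert_of_notMem heH0]
        by_cases heG : e ∈ G
        · rcases (htw2 G heG).mp hGT with ⟨h, -⟩ | ⟨h, -⟩
          · have h1 := hH0min _ h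
            have h2 := Finset.card_erase_add_one heG
            omega
          · have := hblta _ h heG
            omega
        · have h1 := (htw2' G heG).mp hGT
          have h2 := hMminE _ h1 (Finset.mem_insert_self e G)
          rw [Finset.card_insert_of_notMem heG] at h2
          omega
    · push_neg at hes
      have hTne : ((D.lc e).dual.twist {e}).F.Nonempty := by
        refine ⟨insert e H0, ?_⟩
        rw [htw2 _ (Finset.mem_insert_self e H0), Finset.erase_insert heH0]
        exact Or.inl ⟨hH0, fun h => hes _ h (Finset.mem_insert_self e H0)⟩
      obtain ⟨W, hW, hWmin⟩ :=
        ((D.lc e).dual.twist {e}).F.exists_min_image Finset.card hTne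
      have heW : e ∉ W := hRLT2 W hW hWmin
      have h1 := (htw2' W heW).mp hW
      exact hes _ h1 (Finset.mem_insert_self e W)
  -- assemble the four parts
  refine ⟨?_, ?_, ?_, ?_⟩
  · constructor
    · intro h
      exact ⟨⟨hRLdp1.mp h.1.2, hRLdp2.mpr h.1.1⟩, fun hl => h.2 (hloop.mpr hl)⟩
    · intro h
      exact ⟨⟨hRLdp2.mp h.1.2, hRLdp1.mpr h.1.1⟩, fun hl => h.2 (hloop.mp hl)⟩
  · constructor
    · intro h
      exact ⟨⟨hRLdp1.mp h.1.2, hRLdp2.mpr h.1.1⟩, hloop.mp h.2⟩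
    · intro h
      exact ⟨⟨hRLdp2.mp h.1.2, hRLdp1.mpr h.1.1⟩, hloop.mpr h.2⟩
  · constructor
    · intro hco
      exact ⟨hco_nonori hco, hL1.mpr hco⟩
    · intro h
      exact hL1.mp h.2
  · constructor
    · intro h
      exact ⟨hpart4f h.1 h.2, fun hl => h.2 (hL1.mp hl)⟩
    · intro h
      have hnCo : ¬D.dual.IsColoop e := fun hc => h.2 (hL1.mpr hc)
      exact ⟨hpart4b h.1 hnCo, hnCo⟩

end SetSystem
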